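/- Let Π* be the rank-k orthogonal projector onto the top-k eigenspace of symmetric Σ with eigengap λ_k − λ_{k+1} > 0, and let Π̂_O be any maximizer of ⟨Σ̂, Π⟩ over Π ∈ F^k supported on the true support (in particular ⟨Σ̂_T, Π̂_O − Π*⟩ ≥ 0 where Σ̂_T is the restriction of Σ̂ to the support). Then ‖Π̂_O − Π*‖_F ≤ 2‖(Σ̂ − Σ)_T‖_F / (λ_k − λ_{k+1}). -/

import Mathlib

open Matrix BigOperators Finset

noncomputable def fip {p : ℕ} (A B : Matrix (Fin p) (Fin p) ℝ) : ℝ := (Aᵀ * B).trace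

noncomputable def fnorm {p : ℕ} (A : Matrix (Fin p) (Fin p) ℝ) : ℝ :=
  Real.sqrt (∑ i, ∑ j, (A i j) ^ 2)

def Fantope {p : ℕ} (k : ℕ) (X : Matrix (Fin p) (Fin p) ℝ) : Prop :=
  X.IsSymm ∧ X.PosSemidef ∧ (1 - X).PosSemidef ∧ X.trace = (k : ℝ)

/-- The orthogonal projector onto the span of the top-`k` eigenvectors. -/
def topProj {p : ℕ} (k : ℕ) (u : Fin p → Fin p → ℝ) : Matrix (Fin p) (Fin p) ℝ :=
  ∑ i ∈ Finset.univ.filter (fun i : Fin p => (i : ℕ) < k), vecMulVec (u i) (u i)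
open scoped Classical in
/-- Restriction of a matrix to an index set T (entries outside T are set to zero). -/
noncomputable def restrict {p : ℕ} (T : Set (Fin p × Fin p))
    (A : Matrix (Fin p) (Fin p) ℝ) : Matrix (Fin p) (Fin p) ℝ :=
  Matrix.of fun i j => if (i, j) ∈ T then A i j else 0

namespace OracleAux

variable {p : ℕ}

/-- entrywise inner product -/
noncomputable def ip (A B : Matrix (Fin p) (Fin p) ℝ) : ℝ := ∑ i, ∑ j, A i j * B i j

lemma fip_eq (A B : Matrix (Fin p) (Fin p) ℝ) : fip A B = ip A B := by
  simp only [fip, ip, Matrix.trace, Matrix.mul_apply, Matrix.diag, Matrix.transpose_apply]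
  exact Finset.sum_comm

lemma ip_comm (A B : Matrix (Fin p) (Fin p) ℝ) : ip A B = ip B A := by
  simp [ip, mul_comm]

lemma ip_sub_right (A B C : Matrix (Fin p) (Fin p) ℝ) :
    ip A (B - C) = ip A B - ip A C := by
  simp [ip, Matrix.sub_apply, mul_sub, Finset.sum_sub_distrib]

lemma ip_sub_left (A B C : Matrix (Fin p) (Fin p) ℝ) :
    ip (A - B) C = ip A C - ip B C := by
  simp [ip, Matrix.sub_apply, sub_mul, Finset.sum_sub_distrib]

lemma ip_sum_left {ι : Type*} (s : Finset ι) (f : ι → Matrix (Fin p) (Fin p) ℝ)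
    (B : Matrix (Fin p) (Fin p) ℝ) :
    ip (∑ i ∈ s, f i) B = ∑ i ∈ s, ip (f i) B := by
  simp only [ip, Matrix.sum_apply, Finset.sum_mul]
  calc ∑ i, ∑ j, ∑ t ∈ s, f t i j * B i j
      = ∑ i, ∑ t ∈ s, ∑ j, f t i j * B i j :=
        Finset.sum_congr rfl fun i _ => Finset.sum_comm
    _ = ∑ t ∈ s, ∑ i, ∑ j, f t i j * B i j := Finset.sum_comm

lemma ip_smul_left (c : ℝ) (A B : Matrix (Fin p) (Fin p) ℝ) :
    ip (c • A) B = c * ip A B := by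
  simp [ip, Finset.mul_sum, mul_assoc]

lemma ip_self_nonneg (A : Matrix (Fin p) (Fin p) ℝ) : 0 ≤ ip A A :=
  Finset.sum_nonneg fun i _ => Finset.sum_nonneg fun j _ => mul_self_nonneg _

lemma fnorm_eq (A : Matrix (Fin p) (Fin p) ℝ) : fnorm A = Real.sqrt (ip A A) := by
  simp [fnorm, ip, sq]

lemma fnorm_nonneg (A : Matrix (Fin p) (Fin p) ℝ) : 0 ≤ fnorm A :=
  Real.sqrt_nonneg _

lemma fnorm_sq (A : Matrix (Fin p) (Fin p) ℝ) : fnorm A ^ 2 = ip A A := by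
  rw [fnorm_eq, Real.sq_sqrt (ip_self_nonneg A)]

/-- Cauchy–Schwarz for the entrywise inner product. -/
lemma ip_le (A B : Matrix (Fin p) (Fin p) ℝ) : ip A B ≤ fnorm A * fnorm B := by
  have h1 : ip A B = ∑ x ∈ (Finset.univ ×ˢ Finset.univ : Finset (Fin p × Fin p)),
      A x.1 x.2 * B x.1 x.2 := by
    rw [Finset.sum_product]; rfl
  have h2 := Finset.sum_mul_sq_le_sq_mul_sq (Finset.univ ×ˢ Finset.univ : Finset (Fin p × Fin p))
      (fun x => A x.1 x.2) (fun x => B x.1 x.2)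
  have hA : (∑ x ∈ (Finset.univ ×ˢ Finset.univ : Finset (Fin p × Fin p)), A x.1 x.2 ^ 2)
      = ip A A := by rw [Finset.sum_product]; simp [ip, sq]
  have hB : (∑ x ∈ (Finset.univ ×ˢ Finset.univ : Finset (Fin p × Fin p)), B x.1 x.2 ^ 2)
      = ip B B := by rw [Finset.sum_product]; simp [ip, sq]
  rw [hA, hB] at h2
  have h3 := Real.sqrt_le_sqrt h2
  rw [Real.sqrt_sq_eq_abs, Real.sqrt_mul (ip_self_nonneg A)] at h3
  calc ip A B ≤ |ip A B| := le_abs_self _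
    _ ≤ Real.sqrt (ip A A) * Real.sqrt (ip B B) := by rw [← h1] at h3; exact h3
    _ = fnorm A * fnorm B := by rw [fnorm_eq, fnorm_eq]

lemma ip_vecMulVec (v : Fin p → ℝ) (M : Matrix (Fin p) (Fin p) ℝ) :
    ip (vecMulVec v v) M = v ⬝ᵥ (M *ᵥ v) := by
  simp only [ip, vecMulVec_apply, dotProduct, mulVec, Finset.mul_sum]
  refine Finset.sum_congr rfl fun i _ => Finset.sum_congr rfl fun j _ => by ring

lemma quad_nonneg {M : Matrix (Fin p) (Fin p) ℝ} (hM : M.PosSemidef) (v : Fin p → ℝ) :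
    0 ≤ ip (vecMulVec v v) M := by
  rw [ip_vecMulVec]
  simpa using hM.dotProduct_mulVec_nonneg v

lemma ip_one_right (M : Matrix (Fin p) (Fin p) ℝ) : ip M 1 = M.trace := by
  simp [ip, Matrix.one_apply, Matrix.trace]

lemma ip_vv_one (v : Fin p → ℝ) : ip (vecMulVec v v) 1 = v ⬝ᵥ v := by
  rw [ip_one_right]
  simp [Matrix.trace, vecMulVec_apply, dotProduct, Matrix.diag]

lemma ip_vv_vv (v w : Fin p → ℝ) :
    ip (vecMulVec v v) (vecMulVec w w) = (v ⬝ᵥ w) ^ 2 := by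
  simp only [ip, vecMulVec_apply, dotProduct, sq, Finset.sum_mul_sum]
  refine Finset.sum_congr rfl fun i _ => Finset.sum_congr rfl fun j _ => by ring

open scoped MatrixOrder in
/-- trace of product of two real PSD matrices is nonneg -/
lemma trace_mul_nonneg {A B : Matrix (Fin p) (Fin p) ℝ} (hA : A.PosSemidef)
    (hB : B.PosSemidef) : 0 ≤ (A * B).trace := by
  have hs := (CFC.sqrt_nonneg A).posSemidef
  have h1 : (CFC.sqrt A * B * CFC.sqrt A).trace = (A * B).trace := by
    rw [Matrix.trace_mul_comm, ← Matrix.mul_assoc, CFC.sqrt_mul_sqrt_self A hA.nonneg]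
  have h2 : (CFC.sqrt A * B * (CFC.sqrt A)ᴴ).PosSemidef := hB.mul_mul_conjTranspose_same (CFC.sqrt A)
  rw [hs.isHermitian] at h2
  rw [← h1]
  have hdiag : ∀ i, 0 ≤ (CFC.sqrt A * B * CFC.sqrt A) i i := by
    intro i
    have h3 := h2.dotProduct_mulVec_nonneg (Pi.single i 1)
    simpa [dotProduct, mulVec, Pi.single_apply, Finset.sum_ite_eq, Finset.sum_ite_eq']
      using h3
  exact Finset.sum_nonneg fun i _ => hdiag i

lemma ip_restrict (T : Set (Fin p × Fin p)) (A D : Matrix (Fin p) (Fin p) ℝ)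
    (hD : ∀ i j, (i, j) ∉ T → D i j = 0) : ip (restrict T A) D = ip A D := by
  classical
  refine Finset.sum_congr rfl fun i _ => Finset.sum_congr rfl fun j _ => ?_
  by_cases h : (i, j) ∈ T
  · simp [_root_.restrict, h]
  · simp [_root_.restrict, h, hD i j h]

lemma restrict_sub (T : Set (Fin p × Fin p)) (A B : Matrix (Fin p) (Fin p) ℝ) :
    restrict T (A - B) = restrict T A - restrict T B := by
  classical
  ext i j
  by_cases h : (i, j) ∈ T <;> simp [_root_.restrict, h]

lemma card_filter_lt {k : ℕ} (hkp : k ≤ p) :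
    (Finset.univ.filter (fun i : Fin p => (i : ℕ) < k)).card = k := by
  classical
  have : (Finset.univ.filter (fun i : Fin p => (i : ℕ) < k)).image (Fin.val)
      = Finset.range k := by
    ext m
    simp only [Finset.mem_image, Finset.mem_filter, Finset.mem_univ, true_and,
      Finset.mem_range]
    constructor
    · rintro ⟨i, hi, rfl⟩; exact hi
    · intro hm; exact ⟨⟨m, lt_of_lt_of_le hm hkp⟩, hm, rfl⟩
  have hinj : Set.InjOn Fin.val ((Finset.univ.filter (fun i : Fin p => (i : ℕ) < k)) : Set (Fin p)) :=
    fun a _ b _ h => Fin.val_injective h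
  rw [← Finset.card_image_of_injOn hinj, this, Finset.card_range]

lemma sum_outer_eq_one (u : Fin p → Fin p → ℝ)
    (horth : ∀ i j, u i ⬝ᵥ u j = if i = j then (1 : ℝ) else 0) :
    (∑ i, vecMulVec (u i) (u i)) = (1 : Matrix (Fin p) (Fin p) ℝ) := by
  classical
  set U : Matrix (Fin p) (Fin p) ℝ := Matrix.of u with hU
  have h1 : U * Uᵀ = 1 := by
    ext i j
    simp only [Matrix.mul_apply, Matrix.transpose_apply, hU, Matrix.of_apply]
    have := horth i j
    simpa [dotProduct, Matrix.one_apply] using this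
  have h2 : Uᵀ * U = 1 := mul_eq_one_comm.mp h1
  ext a b
  have := congrArg (fun M => M a b) h2
  simp only [Matrix.mul_apply, Matrix.transpose_apply, hU, Matrix.of_apply] at this
  simpa [Matrix.sum_apply, vecMulVec_apply, mul_comm] using this

end OracleAux

open OracleAux

/-- oracle error bound.  If Π* is the top-k projector of Σ with eigengap
λ_k − λ_{k+1} > 0 and Π̂_O ∈ F^k is supported on T with ⟨Σ̂_T, Π̂_O − Π*⟩ ≥ 0, then
‖Π̂_O − Π*‖_F ≤ 2‖(Σ̂ − Σ)_T‖_F / (λ_k − λ_{k+1}). -/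
theorem oracle_estimator_error_bound (p k : ℕ) (hk : 0 < k) (hkp : k < p)
    (Sig SigHat : Matrix (Fin p) (Fin p) ℝ) (hSigHat : SigHat.IsSymm)
    (l : Fin p → ℝ) (u : Fin p → Fin p → ℝ)
    (hdecomp : Sig = ∑ i, l i • vecMulVec (u i) (u i))
    (horth : ∀ i j, u i ⬝ᵥ u j = if i = j then (1 : ℝ) else 0)
    (hl : Antitone l)
    (hgap : l ⟨k, hkp⟩ < l ⟨k - 1, by omega⟩)
    (T : Set (Fin p × Fin p))
    (PO : Matrix (Fin p) (Fin p) ℝ) (hPO : Fantope k PO)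
    (hsuppStar : ∀ i j, (i, j) ∉ T → topProj k u i j = 0)
    (hsuppO : ∀ i j, (i, j) ∉ T → PO i j = 0)
    (hopt : 0 ≤ fip (restrict T SigHat) (PO - topProj k u)) :
    fnorm (PO - topProj k u) ≤
      2 * fnorm (restrict T (SigHat - Sig)) / (l ⟨k - 1, by omega⟩ - l ⟨k, hkp⟩) := by
  classical
  obtain ⟨hXsymm, hXpsd, hIXpsd, hXtr⟩ := hPO
  set X := PO with hX
  set Pi := topProj k u with hPi
  set D := X - Pi with hD
  set s : Finset (Fin p) := Finset.univ.filter (fun i : Fin p => (i : ℕ) < k) with hs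
  set a : Fin p → ℝ := fun i => ip (vecMulVec (u i) (u i)) X with ha
  set δ : ℝ := l ⟨k - 1, by omega⟩ - l ⟨k, hkp⟩ with hδ
  have hδpos : 0 < δ := sub_pos.mpr hgap
  have hcardk : s.card = k := card_filter_lt (le_of_lt hkp)
  have hUUt := sum_outer_eq_one u horth
  have ha_nonneg : ∀ i, 0 ≤ a i := fun i => quad_nonneg hXpsd (u i)
  have ha_le_one : ∀ i, a i ≤ 1 := by
    intro i
    have h0 := quad_nonneg hIXpsd (u i)
    rw [ip_sub_right] at h0
    have h1 : ip (vecMulVec (u i) (u i)) 1 = 1 := by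
      rw [ip_vv_one, horth i i, if_pos rfl]
    rw [h1] at h0
    linarith
  have hsuma : ∑ i, a i = (k : ℝ) := by
    have h := ip_sum_left (Finset.univ) (fun i => vecMulVec (u i) (u i)) X
    rw [hUUt] at h
    rw [ip_comm, ip_one_right, hXtr] at h
    exact h.symm
  have hvvPi : ∀ i, ip (vecMulVec (u i) (u i)) Pi = if i ∈ s then 1 else 0 := by
    intro i
    rw [hPi, topProj, ip_comm, ip_sum_left, ← hs]
    have h : ∀ j ∈ s, ip (vecMulVec (u j) (u j)) (vecMulVec (u i) (u i))
        = if j = i then 1 else 0 := by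
      intro j _
      rw [ip_vv_vv, horth]
      by_cases h : j = i <;> simp [h]
    rw [Finset.sum_congr rfl h, Finset.sum_ite_eq' s i (fun _ => (1:ℝ))]
  have hPiPi : ip Pi Pi = (k : ℝ) := by
    nth_rewrite 1 [hPi, topProj]
    rw [ip_sum_left, ← hs]
    rw [Finset.sum_congr rfl (fun i hi => hvvPi i)]
    rw [Finset.sum_congr rfl (fun i hi => if_pos hi), Finset.sum_const, nsmul_eq_mul,
      mul_one, hcardk]
  have hPiX : ip Pi X = ∑ i ∈ s, a i := by
    rw [hPi, topProj, ip_sum_left, ← hs]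
  have hXX : ip X X ≤ (k : ℝ) := by
    have h0 := trace_mul_nonneg hXpsd hIXpsd
    have h1 : (X * (1 - X)).trace = X.trace - (X * X).trace := by
      rw [Matrix.mul_sub, Matrix.mul_one, Matrix.trace_sub]
    have h2 : (X * X).trace = ip X X := by
      have h3 : fip X X = ip X X := fip_eq X X
      rw [← h3, fip, hXsymm]
    rw [h1, h2, hXtr] at h0
    linarith
  set S : ℝ := ∑ i ∈ s, (1 - a i) with hS
  have hSsum : S = (k : ℝ) - ∑ i ∈ s, a i := by
    rw [hS, Finset.sum_sub_distrib, Finset.sum_const, nsmul_eq_mul, mul_one, hcardk]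
  have hDD : ip D D ≤ 2 * S := by
    have e1 : ip D D = ip X X - 2 * ip Pi X + ip Pi Pi := by
      rw [hD, ip_sub_left, ip_sub_right, ip_sub_right, ip_comm Pi X]
      ring
    rw [e1, hPiPi, hPiX]
    linarith
  have hgapS : δ * S ≤ ip Sig (Pi - X) := by
    have e1 : ip Sig (Pi - X) = ∑ i, l i * ((if i ∈ s then 1 else 0) - a i) := by
      rw [hdecomp, ip_sum_left]
      refine Finset.sum_congr rfl fun i _ => ?_
      rw [ip_smul_left, ip_sub_right, hvvPi, ha]
    rw [e1]
    have hsplit : ∑ i, l i * ((if i ∈ s then 1 else 0) - a i)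
        = ∑ i ∈ s, l i * (1 - a i) + ∑ i ∈ sᶜ, l i * (0 - a i) := by
      rw [← Finset.sum_add_sum_compl s]
      congr 1
      · exact Finset.sum_congr rfl fun i hi => by rw [if_pos hi]
      · exact Finset.sum_congr rfl fun i hi => by
          rw [if_neg (Finset.mem_compl.mp hi)]
    rw [hsplit]
    have hb1 : ∑ i ∈ s, (l ⟨k - 1, by omega⟩) * (1 - a i) ≤ ∑ i ∈ s, l i * (1 - a i) := by
      refine Finset.sum_le_sum fun i hi => ?_
      have hik : (i : ℕ) < k := by
        rw [hs] at hi; exact (Finset.mem_filter.mp hi).2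
      have hle : l ⟨k - 1, by omega⟩ ≤ l i := by
        apply hl
        rw [Fin.le_def]
        simpa using (by omega : (i : ℕ) ≤ k - 1)
      have h1a : 0 ≤ 1 - a i := by linarith [ha_le_one i]
      nlinarith
    have hb2 : ∑ i ∈ sᶜ, (l ⟨k, hkp⟩) * (0 - a i) ≤ ∑ i ∈ sᶜ, l i * (0 - a i) := by
      refine Finset.sum_le_sum fun i hi => ?_
      have hik : ¬ (i : ℕ) < k := by
        have h := Finset.mem_compl.mp hi
        rw [hs] at h
        simpa using h
      have hle : l i ≤ l ⟨k, hkp⟩ := by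
        apply hl
        rw [Fin.le_def]
        simpa using (by omega : k ≤ (i : ℕ))
      have hai := ha_nonneg i
      nlinarith
    have hsc : ∑ i ∈ sᶜ, a i = S := by
      have h := Finset.sum_add_sum_compl s a
      rw [hsuma] at h
      linarith [hSsum]
    have e3 : ∑ i ∈ s, (l ⟨k - 1, by omega⟩) * (1 - a i) = l ⟨k - 1, by omega⟩ * S := by
      rw [hS, Finset.mul_sum]
    have e4 : ∑ i ∈ sᶜ, (l ⟨k, hkp⟩) * (0 - a i) = - (l ⟨k, hkp⟩ * S) := by
      rw [← hsc, Finset.mul_sum, ← Finset.sum_neg_distrib]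
      exact Finset.sum_congr rfl fun i _ => by ring
    have e5 : δ * S = l ⟨k - 1, by omega⟩ * S - l ⟨k, hkp⟩ * S := by rw [hδ]; ring
    linarith [hb1, hb2]
  have hDsupp : ∀ i j, (i, j) ∉ T → (Pi - X) i j = 0 := by
    intro i j hij
    simp [Matrix.sub_apply, hsuppStar i j hij, hsuppO i j hij]
  have hXPisupp : ∀ i j, (i, j) ∉ T → (X - Pi) i j = 0 := by
    intro i j hij
    simp [Matrix.sub_apply, hsuppStar i j hij, hsuppO i j hij]
  have hopt' : 0 ≤ ip (restrict T SigHat) (X - Pi) := by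
    rw [← fip_eq]; exact hopt
  have key : ip Sig (Pi - X) ≤ fnorm (restrict T (SigHat - Sig)) * fnorm D := by
    have e1 : ip Sig (Pi - X) = ip (restrict T Sig) (Pi - X) :=
      (ip_restrict T Sig (Pi - X) hDsupp).symm
    have e3 : ip (restrict T (SigHat - Sig)) (X - Pi)
        = ip (restrict T SigHat) (X - Pi) - ip (restrict T Sig) (X - Pi) := by
      rw [restrict_sub, ip_sub_left]
    have e4 : ip (restrict T Sig) (X - Pi) = - ip (restrict T Sig) (Pi - X) := by
      rw [ip_sub_right, ip_sub_right]; ring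
    have e5 : ip (restrict T (SigHat - Sig)) (X - Pi)
        ≤ fnorm (restrict T (SigHat - Sig)) * fnorm (X - Pi) := ip_le _ _
    rw [hD]
    rw [e1]
    rw [e4] at e3
    linarith
  set N : ℝ := fnorm D with hN
  set E : ℝ := fnorm (restrict T (SigHat - Sig)) with hE
  have hNnn : 0 ≤ N := fnorm_nonneg _
  have hEnn : 0 ≤ E := fnorm_nonneg _
  have hN2 : N ^ 2 = ip D D := fnorm_sq _
  have hchain : δ * N ^ 2 ≤ 2 * (E * N) := by
    rw [hN2]
    calc δ * ip D D ≤ δ * (2 * S) := mul_le_mul_of_nonneg_left hDD (le_of_lt hδpos)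
      _ = 2 * (δ * S) := by ring
      _ ≤ 2 * ip Sig (Pi - X) := by linarith [hgapS]
      _ ≤ 2 * (E * N) := by linarith [key]
  have hfin : N * δ ≤ 2 * E := by
    rcases eq_or_lt_of_le hNnn with h0 | h0
    · rw [← h0, zero_mul]; positivity
    · nlinarith
  have hgoal : N ≤ 2 * E / δ := (le_div_iff₀ hδpos).mpr hfin
  exact hgoal
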